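/- Let m₁, m₂, n₂ be positive real numbers with (m₂ − n₂)² ≥ 4n₂m₁, and let θ ∈ (0, π/2). Then the equation 2m₁ + 4m₂ + 4n₂ = m₁·((cot(θ/2))² + (tan(θ/2))²) + 4m₂·(cot θ)² + 4n₂·(tan θ)² holds if and only if (tan θ)² = (m₂ + n₂ + √((m₂ − n₂)² − 4n₂m₁))/(2n₂) or (tan θ)² = (m₂ + n₂ − √((m₂ − n₂)² − 4n₂m₁))/(2n₂). -/

import Mathlib

open Real

theorem stmt_12 (m₁ m₂ n₂ θ : ℝ) (hm₁ : 0 < m₁) (hm₂ : 0 < m₂) (hn₂ : 0 < n₂)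
    (h : (m₂ - n₂) ^ 2 ≥ 4 * n₂ * m₁)
    (hθ : θ ∈ Set.Ioo 0 (π / 2)) :
    2 * m₁ + 4 * m₂ + 4 * n₂ =
        m₁ * ((Real.cot (θ / 2)) ^ 2 + (Real.tan (θ / 2)) ^ 2) +
          4 * m₂ * (Real.cot θ) ^ 2 + 4 * n₂ * (Real.tan θ) ^ 2 ↔
      (Real.tan θ) ^ 2 =
          (m₂ + n₂ + Real.sqrt ((m₂ - n₂) ^ 2 - 4 * n₂ * m₁)) / (2 * n₂) ∨
        (Real.tan θ) ^ 2 =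
          (m₂ + n₂ - Real.sqrt ((m₂ - n₂) ^ 2 - 4 * n₂ * m₁)) / (2 * n₂) := by
  obtain ⟨hθ1, hθ2⟩ := hθ
  have hpi : (0:ℝ) < π := Real.pi_pos
  have hsin : 0 < Real.sin θ := Real.sin_pos_of_pos_of_lt_pi hθ1 (by linarith)
  have hcos : 0 < Real.cos θ := Real.cos_pos_of_mem_Ioo ⟨by linarith, hθ2⟩
  have hsinh : 0 < Real.sin (θ/2) := Real.sin_pos_of_pos_of_lt_pi (by linarith) (by linarith)
  have hcosh : 0 < Real.cos (θ/2) := Real.cos_pos_of_mem_Ioo ⟨by linarith, by linarith⟩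
  have hs2 : Real.sin θ = 2 * Real.sin (θ/2) * Real.cos (θ/2) := by
    conv_lhs => rw [show θ = 2*(θ/2) by ring, Real.sin_two_mul]
  have hc2 : Real.cos θ = 2 * Real.cos (θ/2)^2 - 1 := by
    conv_lhs => rw [show θ = 2*(θ/2) by ring, Real.cos_two_mul]
  have hpyth : Real.sin (θ/2)^2 + Real.cos (θ/2)^2 = 1 := Real.sin_sq_add_cos_sq _
  have key : ∀ s c : ℝ, 0 < s → 0 < c → s^2 + c^2 = 1 →
      (c/s)^2 + (s/c)^2 = 4 * ((2*c^2-1)/(2*s*c))^2 + 2 := by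
    intro s c hs hc hp
    field_simp
    linear_combination (4*s^2 - 12*c^2 + 4) * hp
  have hA : (Real.cot (θ/2))^2 + (Real.tan (θ/2))^2 = 4 * (Real.cot θ)^2 + 2 := by
    rw [Real.cot_eq_cos_div_sin, Real.cot_eq_cos_div_sin, Real.tan_eq_sin_div_cos, hs2, hc2]
    exact key _ _ hsinh hcosh hpyth
  have htanpos : 0 < Real.tan θ := Real.tan_pos_of_pos_of_lt_pi_div_two hθ1 hθ2
  have hct : (Real.cot θ)^2 * (Real.tan θ)^2 = 1 := by
    rw [Real.cot_eq_cos_div_sin, Real.tan_eq_sin_div_cos]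
    field_simp
  set u := (Real.tan θ)^2 with hu
  have hupos : 0 < u := by positivity
  set s := Real.sqrt ((m₂ - n₂) ^ 2 - 4 * n₂ * m₁) with hsdef
  have hs0 : 0 ≤ s := Real.sqrt_nonneg _
  have hssq : s^2 = (m₂ - n₂) ^ 2 - 4 * n₂ * m₁ := Real.sq_sqrt (by linarith)
  have hcvalue : (Real.cot θ)^2 = 1 / u := by
    field_simp
    linarith [hct]
  rw [hA, hcvalue]
  have hquad : (2 * m₁ + 4 * m₂ + 4 * n₂ =
      m₁ * (4 * (1/u) + 2) + 4 * m₂ * (1/u) + 4 * n₂ * u) ↔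
      n₂ * u^2 - (m₂ + n₂) * u + (m₁ + m₂) = 0 := by
    rw [show m₁ * (4 * (1/u) + 2) + 4 * m₂ * (1/u) + 4 * n₂ * u
        = (4*m₁ + 4*m₂)/u + (2*m₁ + 4*n₂*u) by field_simp; ring]
    constructor
    · intro heq
      have h2 : (4*m₁+4*m₂)/u * u = (4*m₂+4*n₂ - 4*n₂*u) * u := by
        rw [show (4*m₁+4*m₂)/u = 4*m₂+4*n₂-4*n₂*u by linarith]
      rw [div_mul_cancel₀ _ (ne_of_gt hupos)] at h2
      linarith [h2]
    · intro hq
      have h3 : (4*m₁+4*m₂)/u = (4*m₂+4*n₂-4*n₂*u) := by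
        rw [div_eq_iff (ne_of_gt hupos)]; linarith [hq]
      rw [h3]; ring
  rw [hquad]
  have hfac : n₂ * u^2 - (m₂ + n₂) * u + (m₁ + m₂) =
      n₂ * ((u - (m₂ + n₂ + s) / (2*n₂)) * (u - (m₂ + n₂ - s) / (2*n₂))) := by
    field_simp
    linear_combination hssq
  rw [hfac]
  rw [mul_eq_zero, mul_eq_zero, sub_eq_zero, sub_eq_zero]
  simp [ne_of_gt hn₂]
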